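/- Let ρ = (ρ_i(s))_{i∈[n], s∈[k]^n} be any family of reals with ρ_i(s) ∈ (0,1] for all i and s, such that for every signal profile s there is at least one agent i with ρ_i(s) = 1. Then there exists a family of value functions v_i : [k]^n → ℝ_{>0} (i ∈ [n]) that is strictly increasing in every signal coordinate (v_i(a, s_{-j}) < v_i(b, s_{-j}) whenever a < b, for every agent i and coordinate j) and that induces the given ratios, i.e., v_i(s) / max_{j∈[n]} v_j(s) = ρ_i(s) for all i and s. Likewise, there exists a family of cost functions c_i : [k]^n → ℝ_{>0} strictly decreasing in every signal coordinate with min_{j∈[n]} c_j(s) / c_i(s) = ρ_i(s) for all i and s. -/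
import Mathlib


/-- Any family of performance ratios `ρ` (with `ρ i s ∈ (0,1]` and some agent
achieving `1` at every profile) is induced by strictly increasing value functions, and also
by strictly decreasing cost functions. -/
theorem stmt0 (n k : ℕ) [NeZero n] [NeZero k]
    (ρ : Fin n → (Fin n → Fin k) → ℝ)
    (hρ : ∀ i s, 0 < ρ i s ∧ ρ i s ≤ 1)
    (hρ1 : ∀ s, ∃ i, ρ i s = 1) :
    (∃ v : Fin n → (Fin n → Fin k) → ℝ,
      (∀ i s, 0 < v i s) ∧
      (∀ (i j : Fin n) (s : Fin n → Fin k) (a b : Fin k), a < b →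
        v i (Function.update s j a) < v i (Function.update s j b)) ∧
      (∀ i s, v i s / (Finset.univ.sup' Finset.univ_nonempty (fun j => v j s)) = ρ i s)) ∧
    (∃ c : Fin n → (Fin n → Fin k) → ℝ,
      (∀ i s, 0 < c i s) ∧
      (∀ (i j : Fin n) (s : Fin n → Fin k) (a b : Fin k), a < b →
        c i (Function.update s j b) < c i (Function.update s j a)) ∧
      (∀ i s, (Finset.univ.inf' Finset.univ_nonempty (fun j => c j s)) / c i s = ρ i s)) := by
  -- the minimal ratio
  set ε : ℝ := Finset.univ.inf' Finset.univ_nonempty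
      (fun p : Fin n × (Fin n → Fin k) => ρ p.1 p.2) with hε
  have hεpos : 0 < ε := by
    rw [hε, Finset.lt_inf'_iff]
    exact fun p _ => (hρ p.1 p.2).1
  have hεle : ∀ i s, ε ≤ ρ i s := fun i s =>
    Finset.inf'_le _ (Finset.mem_univ (⟨i, s⟩ : Fin n × (Fin n → Fin k)))
  set C : ℝ := 1 + 1/ε with hC
  have hC1 : 1 < C := by
    have h : 0 < 1/ε := by positivity
    rw [hC]; linarith
  have hC0 : 0 < C := lt_trans one_pos hC1
  have hεC : 1 < ε * C := by
    have h : ε * C = ε + 1 := by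
      rw [hC]; field_simp
    linarith
  -- the total signal
  set T : (Fin n → Fin k) → ℕ := fun s => ∑ j, (s j : ℕ) with hT
  set v : Fin n → (Fin n → Fin k) → ℝ := fun i s => ρ i s * C ^ (T s) with hv
  have hvpos : ∀ i s, 0 < v i s := fun i s => by
    have := (hρ i s).1; positivity
  have hTkey : ∀ (j : Fin n) (s : Fin n → Fin k) (a b : Fin k), a < b →
      T (Function.update s j a) + 1 ≤ T (Function.update s j b) := by
    intro j s a b hab
    have hcast : ∀ (x : Fin k) (l : Fin n), ((Function.update s j x l : Fin k) : ℕ)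
        = Function.update (fun l => ((s l : ℕ))) j (x : ℕ) l := by
      intro x l
      by_cases h : l = j
      · subst h; simp
      · simp [h]
    have key : ∀ x : Fin k, T (Function.update s j x)
        = (x : ℕ) + ∑ l ∈ Finset.univ \ {j}, (s l : ℕ) := by
      intro x
      rw [hT]
      simp only [hcast]
      exact Finset.sum_update_of_mem (Finset.mem_univ j) (fun l => (s l : ℕ)) (x : ℕ)
    have ha := key a
    have hb := key b
    have : (a : ℕ) + 1 ≤ (b : ℕ) := hab
    omega
  have hvmono : ∀ (i j : Fin n) (s : Fin n → Fin k) (a b : Fin k), a < b →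
      v i (Function.update s j a) < v i (Function.update s j b) := by
    intro i j s a b hab
    have hTa := hTkey j s a b hab
    set ta := T (Function.update s j a)
    set tb := T (Function.update s j b)
    have h1 : v i (Function.update s j a) ≤ C ^ ta := by
      simp only [hv]
      have := (hρ i (Function.update s j a)).2
      have hp : (0:ℝ) < C ^ ta := by positivity
      nlinarith
    have h2 : ε * C ^ (ta + 1) ≤ v i (Function.update s j b) := by
      simp only [hv]
      have hle : C ^ (ta + 1) ≤ C ^ tb := pow_le_pow_right₀ (le_of_lt hC1) hTa
      have := hεle i (Function.update s j b)
      have hp : (0:ℝ) < C ^ tb := by positivity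
      nlinarith
    have h3 : C ^ ta < ε * C ^ (ta + 1) := by
      have hp : (0:ℝ) < C ^ ta := by positivity
      calc C ^ ta = 1 * C ^ ta := (one_mul _).symm
        _ < (ε * C) * C ^ ta := by nlinarith
        _ = ε * C ^ (ta + 1) := by ring
    linarith
  have hsup : ∀ s, Finset.univ.sup' Finset.univ_nonempty (fun j => v j s) = C ^ (T s) := by
    intro s
    apply le_antisymm
    · apply Finset.sup'_le
      intro j _
      simp only [hv]
      have := (hρ j s).2
      have hp : (0:ℝ) < C ^ (T s) := by positivity
      nlinarith
    · obtain ⟨i, hi⟩ := hρ1 s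
      have : C ^ (T s) = v i s := by simp only [hv]; rw [hi, one_mul]
      rw [this]
      exact Finset.le_sup' (fun j => v j s) (Finset.mem_univ i)
  constructor
  · refine ⟨v, hvpos, hvmono, ?_⟩
    intro i s
    rw [hsup]; simp only [hv]
    have hp : (0:ℝ) < C ^ (T s) := by positivity
    field_simp
  · refine ⟨fun i s => (v i s)⁻¹, fun i s => inv_pos.mpr (hvpos i s), ?_, ?_⟩
    · intro i j s a b hab
      exact inv_strictAnti₀ (hvpos i _) (hvmono i j s a b hab)
    · intro i s
      have hinf : Finset.univ.inf' Finset.univ_nonempty (fun j => (v j s)⁻¹)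
          = (C ^ (T s))⁻¹ := by
        apply le_antisymm
        · obtain ⟨i', hi'⟩ := hρ1 s
          have hvi : v i' s = C ^ (T s) := by simp only [hv]; rw [hi', one_mul]
          calc Finset.univ.inf' Finset.univ_nonempty (fun j => (v j s)⁻¹)
              ≤ (v i' s)⁻¹ := Finset.inf'_le _ (Finset.mem_univ i')
            _ = (C ^ (T s))⁻¹ := by rw [hvi]
        · apply Finset.le_inf'
          intro j _
          apply inv_anti₀ (hvpos j s)
          rw [← hsup s]
          exact Finset.le_sup' (fun j => v j s) (Finset.mem_univ j)
      rw [hinf]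
      have hp : (0:ℝ) < C ^ (T s) := by positivity
      have hvp := hvpos i s
      simp only [hv]
      rw [div_eq_mul_inv, inv_inv, inv_mul_eq_div]
      field_simp
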